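/- Consider the induced W_{D_m}-action on H_*((S²)^m) in the line-diagram basis: l_U·s_i^D = l_{τ_i U} for 1 ≤ i ≤ m−1, and l_U·s_0^D = (−1)^{χ(U)} l_{τ_1 U} where χ(U) = |{1,2} ∩ U|. If a is a cup diagram in which vertices i and i+1 are connected by a cup, then the vector L_a = ∑_{U∈𝒰_a} (−1)^{Λ_a(U)} l_U satisfies L_a·s_i^D = −L_a if the cup is unmarked and L_a·s_i^D = L_a if the cup is marked. -/
import Mathlib


open scoped Classical

namespace CupDiagrams

variable {m : ℕ}

/-- Vertex `i` carries a ray: it is not an endpoint of any cup. -/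
def IsRay (cup : Finset (Fin m × Fin m)) (i : Fin m) : Prop :=
  ∀ p ∈ cup, p.1 ≠ i ∧ p.2 ≠ i

/-- `(cup, cupMarked, rayMarked)` is a marked cup diagram on `m` vertices in `C_KL(m)`. -/
def IsKL (cup cupMarked : Finset (Fin m × Fin m)) (rayMarked : Finset (Fin m)) : Prop :=
  (∀ p ∈ cup, p.1 < p.2) ∧
  (∀ p ∈ cup, ∀ q ∈ cup, p ≠ q →
      p.1 ≠ q.1 ∧ p.1 ≠ q.2 ∧ p.2 ≠ q.1 ∧ p.2 ≠ q.2) ∧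
  (∀ p ∈ cup, ∀ q ∈ cup, ¬(p.1 < q.1 ∧ q.1 < p.2 ∧ p.2 < q.2)) ∧
  (∀ p ∈ cup, ∀ i : Fin m, IsRay cup i → ¬(p.1 < i ∧ i < p.2)) ∧
  cupMarked ⊆ cup ∧
  (∀ p ∈ cupMarked, (∀ q ∈ cup, ¬(q.1 < p.1 ∧ p.2 < q.2)) ∧
      (∀ i : Fin m, IsRay cup i → ¬(i < p.1))) ∧
  (∀ i ∈ rayMarked, IsRay cup i ∧ ∀ j : Fin m, IsRay cup j → ¬(j < i)) ∧
  Even (rayMarked.card + (cup \ cupMarked).card)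

/-- `𝒰_a`: the subsets `U ⊆ {1,…,m}` containing exactly one endpoint of each cup of the
diagram and no ray vertices. -/
noncomputable def CalU (cup : Finset (Fin m × Fin m)) : Finset (Finset (Fin m)) :=
  Finset.univ.filter fun U =>
    (∀ p ∈ cup, (p.1 ∈ U ↔ p.2 ∉ U)) ∧ ∀ i ∈ U, ∃ p ∈ cup, i = p.1 ∨ i = p.2

/-- `Λ_a(U)`: the number of right endpoints of unmarked cups in `U` plus the number of
endpoints of marked cups in `U`. -/
noncomputable def Lam (cup cupMarked : Finset (Fin m × Fin m)) (U : Finset (Fin m)) : ℕ :=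
  ((cup \ cupMarked).filter fun p => p.2 ∈ U).card +
    ((cupMarked.filter fun p => p.1 ∈ U).card + (cupMarked.filter fun p => p.2 ∈ U).card)

/-- `L_a = ∑_{U ∈ 𝒰_a} (−1)^{Λ_a(U)} l_U` in the free vector space with basis the
line diagrams `l_U`. -/
noncomputable def La (cup cupMarked : Finset (Fin m × Fin m)) : Finset (Fin m) →₀ ℂ :=
  ∑ U ∈ CalU cup, ((-1 : ℂ) ^ Lam cup cupMarked U) • Finsupp.single U (1 : ℂ)

end CupDiagrams

open CupDiagrams

section Aux

variable {m : ℕ}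

lemma mem_image_swap (v w x : Fin m) (U : Finset (Fin m)) :
    x ∈ U.image (Equiv.swap v w) ↔ Equiv.swap v w x ∈ U := by
  constructor
  · intro h
    obtain ⟨y, hy, rfl⟩ := Finset.mem_image.mp h
    simpa [Equiv.swap_apply_self] using hy
  · intro h
    exact Finset.mem_image.mpr ⟨Equiv.swap v w x, h, Equiv.swap_apply_self _ _ _⟩

end Aux


/-- If vertices `i` and `i+1` of a cup diagram `a` are connected by a cup, then for the
induced `W_{D_m}`-action on `H_*((S²)^m)` (where the corresponding simple reflection acts
on line diagrams by `l_U ↦ l_{τ U}`, `τ` swapping the two vertices), one has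
`L_a·s = −L_a` if the cup is unmarked and `L_a·s = L_a` if the cup is marked. -/
theorem stmt14 (m : ℕ) (cup cupMarked : Finset (Fin m × Fin m)) (rayMarked : Finset (Fin m))
    (hKL : IsKL cup cupMarked rayMarked)
    (v w : Fin m) (hvw : (w : ℕ) = (v : ℕ) + 1) (hcup : (v, w) ∈ cup) :
    Finsupp.mapDomain (fun U : Finset (Fin m) => U.image (Equiv.swap v w))
        (La cup cupMarked) =
      if (v, w) ∈ cupMarked then La cup cupMarked else -La cup cupMarked := by
  set e := Equiv.swap v w with he
  set σ : Finset (Fin m) → Finset (Fin m) := fun U => U.image e with hσ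
  have hvne : v ≠ w := by
    intro h; rw [h] at hvw; omega
  have hother : ∀ p ∈ cup, p ≠ (v, w) → p.1 ≠ v ∧ p.1 ≠ w ∧ p.2 ≠ v ∧ p.2 ≠ w := by
    intro p hp hne
    exact hKL.2.1 p hp (v, w) hcup hne
  have hfix : ∀ p ∈ cup, p ≠ (v, w) → e p.1 = p.1 ∧ e p.2 = p.2 := by
    intro p hp hne
    obtain ⟨h1, h2, h3, h4⟩ := hother p hp hne
    exact ⟨Equiv.swap_apply_of_ne_of_ne h1 h2, Equiv.swap_apply_of_ne_of_ne h3 h4⟩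
  have hσmem : ∀ (U : Finset (Fin m)) (x : Fin m), x ∈ σ U ↔ e x ∈ U := by
    intro U x; exact mem_image_swap v w x U
  have hee : ∀ x, e (e x) = x := fun x => Equiv.swap_apply_self v w x
  have hσσ : ∀ U, σ (σ U) = U := by
    intro U; ext x
    rw [hσmem, hσmem, hee]
  have hmemCal : ∀ U : Finset (Fin m), U ∈ CalU cup ↔
      ((∀ p ∈ cup, (p.1 ∈ U ↔ p.2 ∉ U)) ∧ ∀ i ∈ U, ∃ p ∈ cup, i = p.1 ∨ i = p.2) := by
    intro U; simp [CalU]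
  have hev : e v = w := Equiv.swap_apply_left v w
  have hew : e w = v := Equiv.swap_apply_right v w
  have hCal : ∀ U ∈ CalU cup, σ U ∈ CalU cup := by
    intro U hU
    rw [hmemCal] at hU ⊢
    obtain ⟨h1, h2⟩ := hU
    constructor
    · intro p hp
      by_cases hpe : p = (v, w)
      · subst hpe
        simp only [hσmem, hev, hew]
        have := h1 (v, w) hcup
        simp only at this
        tauto
      · obtain ⟨e1, e2⟩ := hfix p hp hpe
        rw [hσmem, hσmem, e1, e2]
        exact h1 p hp
    · intro i hi
      have hi' : e i ∈ U := (hσmem U i).mp hi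
      obtain ⟨p, hp, hor⟩ := h2 _ hi'
      by_cases hpe : p = (v, w)
      · subst hpe
        refine ⟨(v, w), hcup, ?_⟩
        simp only at hor ⊢
        rcases hor with h | h
        · right; rw [← hee i, h, hev]
        · left; rw [← hee i, h, hew]
      · obtain ⟨e1, e2⟩ := hfix p hp hpe
        refine ⟨p, hp, ?_⟩
        rcases hor with h | h
        · left; rw [← hee i, h, e1]
        · right; rw [← hee i, h, e2]
  have hUvw : ∀ U ∈ CalU cup, (v ∈ U ↔ w ∉ U) := by
    intro U hU
    exact ((hmemCal U).mp hU).1 (v, w) hcup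
  -- sign lemma
  have hsign : ∀ U ∈ CalU cup,
      ((-1 : ℂ)) ^ Lam cup cupMarked (σ U) =
        (if (v, w) ∈ cupMarked then (1 : ℂ) else -1) * (-1) ^ Lam cup cupMarked U := by
    intro U hU
    by_cases hmk : (v, w) ∈ cupMarked
    · rw [if_pos hmk]
      have hA : ((cup \ cupMarked).filter fun p => p.2 ∈ σ U) =
          ((cup \ cupMarked).filter fun p => p.2 ∈ U) := by
        apply Finset.filter_congr
        intro p hp
        have hpc : p ∈ cup := (Finset.mem_sdiff.mp hp).1
        have hpn : p ≠ (v, w) := by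
          intro h; exact (Finset.mem_sdiff.mp hp).2 (h ▸ hmk)
        rw [hσmem, (hfix p hpc hpn).2]
      have hBC : ((cupMarked.filter fun p => p.1 ∈ σ U).card +
            (cupMarked.filter fun p => p.2 ∈ σ U).card) =
          ((cupMarked.filter fun p => p.1 ∈ U).card +
            (cupMarked.filter fun p => p.2 ∈ U).card) := by
        rw [Finset.card_filter, Finset.card_filter, Finset.card_filter, Finset.card_filter,
          ← Finset.sum_add_distrib, ← Finset.sum_add_distrib]
        apply Finset.sum_congr rfl
        intro p hp
        have hpc : p ∈ cup := hKL.2.2.2.2.1 hp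
        by_cases hpe : p = (v, w)
        · subst hpe
          simp only [hσmem, hev, hew]
          exact add_comm _ _
        · obtain ⟨e1, e2⟩ := hfix p hpc hpe
          simp only [hσmem, e1, e2]
      unfold Lam
      rw [hA, hBC, one_mul]
    · rw [if_neg hmk]
      have hvwA : (v, w) ∈ cup \ cupMarked := Finset.mem_sdiff.mpr ⟨hcup, hmk⟩
      have hB : ((cupMarked.filter fun p => p.1 ∈ σ U)) =
          ((cupMarked.filter fun p => p.1 ∈ U)) := by
        apply Finset.filter_congr
        intro p hp
        have hpc : p ∈ cup := hKL.2.2.2.2.1 hp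
        have hpn : p ≠ (v, w) := fun h => hmk (h ▸ hp)
        rw [hσmem, (hfix p hpc hpn).1]
      have hC : ((cupMarked.filter fun p => p.2 ∈ σ U)) =
          ((cupMarked.filter fun p => p.2 ∈ U)) := by
        apply Finset.filter_congr
        intro p hp
        have hpc : p ∈ cup := hKL.2.2.2.2.1 hp
        have hpn : p ≠ (v, w) := fun h => hmk (h ▸ hp)
        rw [hσmem, (hfix p hpc hpn).2]
      -- other elements of cup \ cupMarked keep their condition
      have hAgree : ∀ p ∈ cup \ cupMarked, p ≠ (v, w) → (p.2 ∈ σ U ↔ p.2 ∈ U) := by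
        intro p hp hpn
        have hpc : p ∈ cup := (Finset.mem_sdiff.mp hp).1
        rw [hσmem, (hfix p hpc hpn).2]
      by_cases hw : w ∈ U
      · have hv : v ∉ U := fun hv => (hUvw U hU).mp hv hw
        have hwσ : w ∉ σ U := by rw [hσmem, hew]; exact hv
        have hAset : ((cup \ cupMarked).filter fun p => p.2 ∈ U) =
            insert (v, w) ((cup \ cupMarked).filter fun p => p.2 ∈ σ U) := by
          ext p
          simp only [Finset.mem_insert, Finset.mem_filter]
          constructor
          · rintro ⟨hp, hp2⟩
            by_cases hpn : p = (v, w)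
            · exact Or.inl hpn
            · exact Or.inr ⟨hp, (hAgree p hp hpn).mpr hp2⟩
          · rintro (rfl | ⟨hp, hp2⟩)
            · exact ⟨hvwA, hw⟩
            · by_cases hpn : p = (v, w)
              · subst hpn; exact absurd hp2 hwσ
              · exact ⟨hp, (hAgree p hp hpn).mp hp2⟩
        have hnot : (v, w) ∉ ((cup \ cupMarked).filter fun p => p.2 ∈ σ U) := by
          simp only [Finset.mem_filter]
          exact fun h => hwσ h.2
        have hcard : ((cup \ cupMarked).filter fun p => p.2 ∈ U).card =
            ((cup \ cupMarked).filter fun p => p.2 ∈ σ U).card + 1 := by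
          rw [hAset, Finset.card_insert_of_notMem hnot]
        have hLam : Lam cup cupMarked U = Lam cup cupMarked (σ U) + 1 := by
          unfold Lam
          rw [hB, hC, hcard]; ring
        rw [hLam, pow_succ]
        ring
      · have hv : v ∈ U := by
          by_contra hv
          exact hw (not_not.mp (fun hwn => ((hUvw U hU).not.mp (by tauto)) (by tauto)))
        have hwσ : w ∈ σ U := by rw [hσmem, hew]; exact hv
        have hAset : ((cup \ cupMarked).filter fun p => p.2 ∈ σ U) =
            insert (v, w) ((cup \ cupMarked).filter fun p => p.2 ∈ U) := by
          ext p
          simp only [Finset.mem_insert, Finset.mem_filter]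
          constructor
          · rintro ⟨hp, hp2⟩
            by_cases hpn : p = (v, w)
            · exact Or.inl hpn
            · exact Or.inr ⟨hp, (hAgree p hp hpn).mp hp2⟩
          · rintro (rfl | ⟨hp, hp2⟩)
            · exact ⟨hvwA, hwσ⟩
            · by_cases hpn : p = (v, w)
              · subst hpn; exact absurd hp2 hw
              · exact ⟨hp, (hAgree p hp hpn).mpr hp2⟩
        have hnot : (v, w) ∉ ((cup \ cupMarked).filter fun p => p.2 ∈ U) := by
          simp only [Finset.mem_filter]
          exact fun h => hw h.2
        have hcard : ((cup \ cupMarked).filter fun p => p.2 ∈ σ U).card =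
            ((cup \ cupMarked).filter fun p => p.2 ∈ U).card + 1 := by
          rw [hAset, Finset.card_insert_of_notMem hnot]
        have hLam : Lam cup cupMarked (σ U) = Lam cup cupMarked U + 1 := by
          unfold Lam
          rw [hB, hC, hcard]; ring
        rw [hLam, pow_succ]
        ring
  -- main computation
  have hmap : Finsupp.mapDomain σ (La cup cupMarked) =
      ∑ U ∈ CalU cup, ((-1 : ℂ) ^ Lam cup cupMarked U) • Finsupp.single (σ U) (1 : ℂ) := by
    unfold La
    rw [Finsupp.mapDomain_finset_sum]
    apply Finset.sum_congr rfl
    intro U _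
    rw [Finsupp.mapDomain_smul, Finsupp.mapDomain_single]
  have hreidx : ∑ U ∈ CalU cup, ((-1 : ℂ) ^ Lam cup cupMarked U) • Finsupp.single (σ U) (1 : ℂ) =
      ∑ U ∈ CalU cup, ((-1 : ℂ) ^ Lam cup cupMarked (σ U)) • Finsupp.single U (1 : ℂ) := by
    refine Finset.sum_nbij' σ σ hCal hCal (fun U _ => hσσ U) (fun U _ => hσσ U) ?_
    intro U hU
    rw [hσσ U]
  rw [hmap, hreidx]
  have : ∑ U ∈ CalU cup, ((-1 : ℂ) ^ Lam cup cupMarked (σ U)) • Finsupp.single U (1 : ℂ) =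
      (if (v, w) ∈ cupMarked then (1 : ℂ) else -1) • La cup cupMarked := by
    unfold La
    rw [Finset.smul_sum]
    apply Finset.sum_congr rfl
    intro U hU
    rw [hsign U hU, smul_smul]
  rw [this]
  by_cases hmk : (v, w) ∈ cupMarked
  · rw [if_pos hmk, if_pos hmk, one_smul]
  · rw [if_neg hmk, if_neg hmk, neg_one_smul]
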